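/- Let n ≥ 6 be an integer with n ≡ 2 (mod 4). For every tournament T on n vertices there exists a set of n dice, each with n − 1 sides, X : Fin n → Fin (n−1) → ℕ, such that for all distinct i, j, if T has an edge from i to j then the number of face wins of die X i over die X j is exactly ((n−1)² + 1)/2. -/

import Mathlib

/-- The number of face wins of die `D` over die `E`: the number of pairs `(a, b)`
of faces with `D a > E b`. -/
def faceWins (k : ℕ) (D E : Fin k → ℕ) : ℕ :=
  (Finset.univ.filter (fun p : Fin k × Fin k => D p.1 > E p.2)).card

namespace BalancedDice

open Finset

noncomputable section

variable {n : ℕ}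

/-- the "level" function on differences -/
def g (n : ℕ) (x : ZMod (n-1)) : ℕ :=
  if x = 0 then n / 2 else 2 * min x.val (n - 1 - x.val)

/-- level of vertex `i` in round `r`; vertex `n-1` plays the role of `∞`. -/
def Q (n : ℕ) (i : Fin n) (r : ZMod (n-1)) : ℕ :=
  if i.val = n - 1 then n / 2 else g n ((i.val : ZMod (n-1)) - r)

def finv (hn : 6 ≤ n) (x : ZMod (n-1)) : Fin n :=
  haveI : NeZero (n-1) := ⟨by omega⟩
  ⟨x.val, by have := ZMod.val_lt x; omega⟩

/-- the opponent matched with `i` in round `r` -/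
def partner (hn : 6 ≤ n) (i : Fin n) (r : ZMod (n-1)) : Fin n :=
  if i.val = n - 1 then finv hn r
  else if (i.val : ZMod (n-1)) = r then ⟨n-1, by omega⟩
  else finv hn (2 * r - (i.val : ZMod (n-1)))

open Classical in
/-- the rank of die `i` in round `r` -/
def eps (hn : 6 ≤ n) (T : Fin n → Fin n → Prop) (r : ZMod (n-1)) (i : Fin n) : ℕ :=
  2 * Q n i r + (if T i (partner hn i r) then 1 else 0)

section lemmas

lemma g_zero : g n 0 = n / 2 := by simp [g]

lemma g_neg (hn : 6 ≤ n) (x : ZMod (n-1)) : g n (-x) = g n x := by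
  haveI : NeZero (n-1) := ⟨by omega⟩
  rcases eq_or_ne x 0 with rfl | hx
  · simp
  · have hneg : (-x) ≠ 0 := neg_ne_zero.mpr hx
    rw [g, g, if_neg hneg, if_neg hx, ZMod.neg_val, if_neg hx]
    have h1 : x.val < n - 1 := ZMod.val_lt x
    have h0 : x.val ≠ 0 := by simpa [ZMod.val_eq_zero] using hx
    have h2 : n - 1 - (n - 1 - x.val) = x.val := by omega
    rw [h2, Nat.min_comm]

lemma g_even {x : ZMod (n-1)} (hx : x ≠ 0) : g n x % 2 = 0 := by
  rw [g, if_neg hx]; omega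

lemma g_inj (hn : 6 ≤ n) (hmod : n % 4 = 2) {x y : ZMod (n-1)} (hg : g n x = g n y) : x = y ∨ x = -y := by
  haveI : NeZero (n-1) := ⟨by omega⟩
  have hm : (n/2) % 2 = 1 := by omega
  rcases eq_or_ne x 0 with rfl | hx
  · rcases eq_or_ne y 0 with rfl | hy
    · left; rfl
    · exfalso
      have h2 := g_even (n := n) hy
      rw [g_zero] at hg; omega
  · rcases eq_or_ne y 0 with rfl | hy
    · exfalso
      have h2 := g_even (n := n) hx
      rw [g_zero] at hg; omega
    · rw [g, g, if_neg hx, if_neg hy] at hg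
      have hx1 : x.val < n - 1 := ZMod.val_lt x
      have hy1 : y.val < n - 1 := ZMod.val_lt y
      have hx0 : x.val ≠ 0 := by simpa [ZMod.val_eq_zero] using hx
      have hy0 : y.val ≠ 0 := by simpa [ZMod.val_eq_zero] using hy
      have : x.val = y.val ∨ x.val = (n-1) - y.val := by omega
      rcases this with h | h
      · left; exact ZMod.val_injective _ h
      · right
        apply ZMod.val_injective
        rw [ZMod.neg_val, if_neg hy, h]

lemma g_bound (x : ZMod (n-1)) : g n x ≤ 2 * n := by
  rw [g]; split
  · omega
  · have : min x.val (n - 1 - x.val) ≤ n := by omega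
    omega


lemma cancel2 (hn : 6 ≤ n) (hmod : n % 4 = 2) {a b : ZMod (n-1)} (h : 2 * a = 2 * b) : a = b := by
  have h1 : ((2 * (n/2) : ℕ) : ZMod (n-1)) = 1 := by
    have h2 : 2 * (n/2) = (n-1) + 1 := by omega
    rw [h2]; push_cast [ZMod.natCast_self]; ring
  calc a = ((2 * (n/2) : ℕ) : ZMod (n-1)) * a := by rw [h1, one_mul]
    _ = ((n/2 : ℕ) : ZMod (n-1)) * (2 * a) := by push_cast; ring
    _ = ((n/2 : ℕ) : ZMod (n-1)) * (2 * b) := by rw [h]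
    _ = ((2 * (n/2) : ℕ) : ZMod (n-1)) * b := by push_cast; ring
    _ = b := by rw [h1, one_mul]

lemma eps_lt_of_Q_lt (hn : 6 ≤ n) (T : Fin n → Fin n → Prop) {i j : Fin n} {r : ZMod (n-1)}
    (h : Q n i r < Q n j r) : eps hn T r i < eps hn T r j := by
  unfold eps; split_ifs <;> omega

lemma eps_lt_iff (hn : 6 ≤ n) (T : Fin n → Fin n → Prop) {i j : Fin n} {r : ZMod (n-1)}
    (h : Q n i r ≠ Q n j r) : (eps hn T r i < eps hn T r j ↔ Q n i r < Q n j r) := by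
  unfold eps; split_ifs <;> omega

lemma eps_matched (hn : 6 ≤ n) (T : Fin n → Fin n → Prop) {i j : Fin n} {r : ZMod (n-1)}
    (hQ : Q n i r = Q n j r) (hpi : partner hn i r = j) (hpj : partner hn j r = i)
    (hT : T i j) (hnT : ¬ T j i) : eps hn T r j < eps hn T r i := by
  unfold eps
  rw [hpi, hpj, if_pos hT, if_neg hnT]
  omega

/-- counting: number of nonzero `x` with `g x` below the middle -/
lemma count_lt [NeZero (n-1)] (hn : 6 ≤ n) (hmod : n % 4 = 2) :
    ((univ : Finset (ZMod (n-1))).filter fun x => g n x < n/2).card = n/2 - 1 := by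
  set h : ℕ := (n-2)/4 with hh
  have hcard : (((Finset.Ico 1 (h+1)) ∪ (Finset.Ico (n-1-h) (n-1))) : Finset ℕ).card = n/2 - 1 := by
    rw [Finset.card_union_of_disjoint]
    · rw [Nat.card_Ico, Nat.card_Ico]; omega
    · rw [Finset.disjoint_left]
      intro a ha hb
      simp only [Finset.mem_Ico] at ha hb
      omega
  rw [← hcard]
  apply card_nbij' (fun x => x.val) (fun t : ℕ => (t : ZMod (n-1)))
  · intro x hx
    simp only [Finset.mem_coe, mem_filter, mem_univ, true_and] at hx
    have hxne : x ≠ 0 := by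
      intro h0; rw [h0, g_zero] at hx; omega
    rw [g, if_neg hxne] at hx
    have h1 : x.val < n - 1 := ZMod.val_lt x
    have h0 : x.val ≠ 0 := by simpa [ZMod.val_eq_zero] using hxne
    simp only [Finset.mem_coe, Finset.mem_union, Finset.mem_Ico]
    omega
  · intro t ht
    simp only [Finset.mem_coe, Finset.mem_union, Finset.mem_Ico] at ht
    have htlt : t < n - 1 := by omega
    have hval : ((t : ZMod (n-1))).val = t := ZMod.val_cast_of_lt htlt
    have htne : (t : ZMod (n-1)) ≠ 0 := by
      intro h0
      rw [h0, ZMod.val_zero] at hval; omega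
    simp only [Finset.mem_coe, mem_filter, mem_univ, true_and]
    rw [g, if_neg htne, hval]
    omega
  · intro x hx
    exact ZMod.natCast_rightInverse x
  · intro t ht
    simp only [Finset.mem_coe, Finset.mem_union, Finset.mem_Ico] at ht
    exact ZMod.val_cast_of_lt (by omega)

lemma count_gt [NeZero (n-1)] (hn : 6 ≤ n) (hmod : n % 4 = 2) :
    ((univ : Finset (ZMod (n-1))).filter fun x => n/2 < g n x).card = n/2 - 1 := by
  set h : ℕ := (n-2)/4 with hh
  have hcard : ((Finset.Ico (h+1) (n-1-h)) : Finset ℕ).card = n/2 - 1 := by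
    rw [Nat.card_Ico]; omega
  rw [← hcard]
  apply card_nbij' (fun x => x.val) (fun t : ℕ => (t : ZMod (n-1)))
  · intro x hx
    simp only [Finset.mem_coe, mem_filter, mem_univ, true_and] at hx
    have hxne : x ≠ 0 := by
      intro h0; rw [h0, g_zero] at hx; omega
    rw [g, if_neg hxne] at hx
    have h1 : x.val < n - 1 := ZMod.val_lt x
    have h0 : x.val ≠ 0 := by simpa [ZMod.val_eq_zero] using hxne
    simp only [Finset.mem_coe, Finset.mem_Ico]
    omega
  · intro t ht
    simp only [Finset.mem_coe, Finset.mem_Ico] at ht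
    have htlt : t < n - 1 := by omega
    have hval : ((t : ZMod (n-1))).val = t := ZMod.val_cast_of_lt htlt
    have htne : (t : ZMod (n-1)) ≠ 0 := by
      intro h0
      rw [h0, ZMod.val_zero] at hval; omega
    simp only [Finset.mem_coe, mem_filter, mem_univ, true_and]
    rw [g, if_neg htne, hval]
    omega
  · intro x hx
    exact ZMod.natCast_rightInverse x
  · intro t ht
    simp only [Finset.mem_coe, Finset.mem_Ico] at ht
    exact ZMod.val_cast_of_lt (by omega)

lemma card_filter_shift [NeZero (n-1)] (hn : 6 ≤ n) (y : ZMod (n-1)) (p : ZMod (n-1) → Prop) [DecidablePred p] :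
    ((univ : Finset (ZMod (n-1))).filter fun r => p (y - r)).card
      = ((univ : Finset (ZMod (n-1))).filter p).card := by
  apply card_nbij' (fun r => y - r) (fun x => y - x)
  · intro r hr
    simp only [Finset.mem_coe, mem_filter, mem_univ, true_and] at hr ⊢
    exact hr
  · intro x hx
    simp only [Finset.mem_coe, mem_filter, mem_univ, true_and] at hx ⊢
    rwa [sub_sub_cancel]
  · intro r _; simp only [sub_sub_cancel]
  · intro x _; simp only [sub_sub_cancel]


lemma eps_ne_of_Q_ne (hn : 6 ≤ n) (T : Fin n → Fin n → Prop) {i j : Fin n} {r : ZMod (n-1)}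
    (h : Q n i r ≠ Q n j r) : eps hn T r i ≠ eps hn T r j := by
  unfold eps; split_ifs <;> omega

lemma finite_pair [NeZero (n-1)] (hn : 6 ≤ n) (hmod : n % 4 = 2) (T : Fin n → Fin n → Prop)
    (htot : ∀ i j : Fin n, i ≠ j → (T i j ↔ ¬ T j i))
    {u v : Fin n} (hu : u.val ≠ n-1) (hv : v.val ≠ n-1) (huv : u ≠ v) (hT : T u v) :
    ((univ : Finset (ZMod (n-1))).filter fun r => eps hn T r v < eps hn T r u).card = n/2 ∧
    ((univ : Finset (ZMod (n-1))).filter fun r => eps hn T r u < eps hn T r v).card = n/2 - 1 ∧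
    (∀ r : ZMod (n-1), eps hn T r u ≠ eps hn T r v) := by
  classical
  set x : ZMod (n-1) := ((u.val : ℕ) : ZMod (n-1)) with hxdef
  set y : ZMod (n-1) := ((v.val : ℕ) : ZMod (n-1)) with hydef
  have hult : u.val < n - 1 := by have := u.isLt; omega
  have hvlt : v.val < n - 1 := by have := v.isLt; omega
  have hxval : x.val = u.val := ZMod.val_cast_of_lt hult
  have hyval : y.val = v.val := ZMod.val_cast_of_lt hvlt
  have hxy : x ≠ y := by
    intro hEq
    exact huv (Fin.ext (by rw [← hxval, ← hyval, hEq]))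
  set L : ZMod (n-1) := ((n/2 : ℕ) : ZMod (n-1)) * (x + y) with hLdef
  have h2m : ((2 * (n/2) : ℕ) : ZMod (n-1)) = 1 := by
    have h2 : 2*(n/2) = (n-1)+1 := by omega
    rw [h2]; push_cast [ZMod.natCast_self]; ring
  have h2L : 2 * L = x + y := by
    calc 2 * L = ((2*(n/2) : ℕ) : ZMod (n-1)) * (x + y) := by rw [hLdef]; push_cast; ring
    _ = x + y := by rw [h2m, one_mul]
  have hQu : ∀ r, Q n u r = g n (x - r) := fun r => by rw [Q, if_neg hu]
  have hQv : ∀ r, Q n v r = g n (y - r) := fun r => by rw [Q, if_neg hv]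
  have keyL : ∀ r : ZMod (n-1), Q n u r = Q n v r ↔ r = L := by
    intro r
    constructor
    · intro hEq
      rw [hQu, hQv] at hEq
      rcases g_inj hn hmod hEq with h | h
      · exact absurd (sub_left_inj.mp h) hxy
      · have h2r : 2 * r = 2 * L := by rw [h2L]; linear_combination -h
        exact cancel2 hn hmod h2r
    · rintro rfl
      rw [hQu, hQv]
      have hs : x - L = -(y - L) := by linear_combination -h2L
      rw [hs, g_neg hn]
  have hφu : ∀ r, Q n u (x + y - r) = Q n v r := by
    intro r
    rw [hQu, hQv]
    have hs : x - (x + y - r) = -(y - r) := by ring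
    rw [hs, g_neg hn]
  have hφv : ∀ r, Q n v (x + y - r) = Q n u r := by
    intro r
    rw [hQu, hQv]
    have hs : y - (x + y - r) = -(x - r) := by ring
    rw [hs, g_neg hn]
  set Wgt : Finset (ZMod (n-1)) := univ.filter (fun r => Q n v r < Q n u r) with hWgtdef
  set Wlt : Finset (ZMod (n-1)) := univ.filter (fun r => Q n u r < Q n v r) with hWltdef
  have hWcard : Wgt.card = Wlt.card := by
    apply card_nbij' (fun r => x + y - r) (fun r => x + y - r)
    · intro r hr
      simp only [Finset.mem_coe, hWgtdef, hWltdef, mem_filter, mem_univ, true_and] at hr ⊢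
      rw [hφu, hφv]
      exact hr
    · intro r hr
      simp only [Finset.mem_coe, hWgtdef, hWltdef, mem_filter, mem_univ, true_and] at hr ⊢
      rw [hφu, hφv]
      exact hr
    · intro r _; ring
    · intro r _; ring
  have hLgt : L ∉ Wgt := by
    rw [hWgtdef, mem_filter]
    rw [(keyL L).mpr rfl]
    simp
  have hLlt : L ∉ Wlt := by
    rw [hWltdef, mem_filter]
    rw [(keyL L).mpr rfl]
    simp
  have hdisj : Disjoint Wgt Wlt := by
    rw [disjoint_left]
    intro r hr1 hr2
    rw [hWgtdef, mem_filter] at hr1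
    rw [hWltdef, mem_filter] at hr2
    omega
  have huniv : (univ : Finset (ZMod (n-1))) = insert L (Wgt ∪ Wlt) := by
    ext r
    simp only [mem_univ, true_iff, mem_insert, mem_union, hWgtdef, hWltdef, mem_filter]
    rcases lt_trichotomy (Q n u r) (Q n v r) with h | h | h
    · right; right; simpa using h
    · left; exact (keyL r).mp h
    · right; left; simpa using h
  have hcards : Wgt.card = n/2 - 1 ∧ Wlt.card = n/2 - 1 := by
    have h1 : (univ : Finset (ZMod (n-1))).card = n - 1 := by
      rw [card_univ, ZMod.card]
    rw [huniv] at h1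
    rw [card_insert_of_notMem (by simp [hLgt, hLlt]), card_union_of_disjoint hdisj] at h1
    omega
  -- matched round facts
  have hxL : x ≠ L := by
    intro hEq
    apply hxy
    have h2x : x + x = x + y := by
      calc x + x = 2 * x := by ring
      _ = 2 * L := by rw [hEq]
      _ = x + y := h2L
    exact add_left_cancel h2x
  have hyL : y ≠ L := by
    intro hEq
    apply hxy
    have h2y : y + y = y + x := by
      calc y + y = 2 * y := by ring
      _ = 2 * L := by rw [hEq]
      _ = x + y := h2L
      _ = y + x := by ring
    exact (add_left_cancel h2y).symm
  have hpu : partner hn u L = v := by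
    rw [partner, if_neg hu, ← hxdef, if_neg hxL]
    have hy2 : 2 * L - x = y := by rw [h2L]; ring
    rw [hy2]
    exact Fin.ext (by rw [finv]; exact hyval)
  have hpv : partner hn v L = u := by
    rw [partner, if_neg hv, ← hydef, if_neg hyL]
    have hx2 : 2 * L - y = x := by rw [h2L]; ring
    rw [hx2]
    exact Fin.ext (by rw [finv]; exact hxval)
  have hnTvu : ¬ T v u := (htot u v huv).mp hT
  have hQL : Q n u L = Q n v L := (keyL L).mpr rfl
  have hmatched : eps hn T L v < eps hn T L u :=
    eps_matched hn T hQL hpu hpv hT hnTvu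
  have hQne : ∀ r : ZMod (n-1), r ≠ L → Q n u r ≠ Q n v r := by
    intro r hr hEq
    exact hr ((keyL r).mp hEq)
  -- the three conclusions
  refine ⟨?_, ?_, ?_⟩
  · have hset : (univ : Finset (ZMod (n-1))).filter (fun r => eps hn T r v < eps hn T r u)
        = insert L Wgt := by
      ext r
      simp only [mem_filter, mem_univ, true_and, mem_insert, hWgtdef]
      constructor
      · intro hlt
        by_cases hr : r = L
        · left; exact hr
        · right
          exact (eps_lt_iff hn T (Ne.symm (hQne r hr))).mp hlt
      · intro h
        rcases h with rfl | hr
        · exact hmatched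
        · exact eps_lt_of_Q_lt hn T hr
    rw [hset, card_insert_of_notMem hLgt, hcards.1]
    omega
  · have hset : (univ : Finset (ZMod (n-1))).filter (fun r => eps hn T r u < eps hn T r v)
        = Wlt := by
      ext r
      simp only [mem_filter, mem_univ, true_and, hWltdef]
      constructor
      · intro hlt
        by_cases hr : r = L
        · exfalso; subst hr; omega
        · exact (eps_lt_iff hn T (hQne r hr)).mp hlt
      · intro hr
        exact eps_lt_of_Q_lt hn T hr
    rw [hset, hcards.2]
  · intro r
    by_cases hr : r = L
    · subst hr; omega
    · exact eps_ne_of_Q_ne hn T (hQne r hr)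


def inf (hn : 6 ≤ n) : Fin n := ⟨n-1, by omega⟩

lemma inf_prelim [NeZero (n-1)] (hn : 6 ≤ n) (hmod : n % 4 = 2) (T : Fin n → Fin n → Prop)
    {w : Fin n} (hw : w.val ≠ n-1) :
    let y : ZMod (n-1) := ((w.val : ℕ) : ZMod (n-1))
    Q n (inf hn) y = Q n w y ∧ partner hn (inf hn) y = w ∧ partner hn w y = inf hn ∧
    (∀ r : ZMod (n-1), r ≠ y → Q n w r ≠ Q n (inf hn) r) ∧
    (∀ r : ZMod (n-1), Q n (inf hn) r = n/2) ∧
    (∀ r : ZMod (n-1), Q n w r = g n (((w.val : ℕ) : ZMod (n-1)) - r)) ∧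
    ((univ : Finset (ZMod (n-1))).filter fun r => Q n w r < n/2).card = n/2 - 1 ∧
    ((univ : Finset (ZMod (n-1))).filter fun r => n/2 < Q n w r).card = n/2 - 1 := by
  intro y
  have hwlt : w.val < n - 1 := by have := w.isLt; omega
  have hyval : y.val = w.val := ZMod.val_cast_of_lt hwlt
  have hQi : ∀ r : ZMod (n-1), Q n (inf hn) r = n/2 := by
    intro r; rw [Q, if_pos (show (inf hn).val = n-1 from rfl)]
  have hQw : ∀ r : ZMod (n-1), Q n w r = g n (y - r) := by
    intro r; rw [Q, if_neg hw]
  have hQy : Q n w y = n/2 := by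
    rw [hQw, sub_self, g_zero]
  refine ⟨?_, ?_, ?_, ?_, hQi, hQw, ?_, ?_⟩
  · rw [hQi, hQy]
  · show partner hn (inf hn) y = w
    rw [partner, if_pos (show (inf hn).val = n-1 from rfl)]
    exact Fin.ext (by rw [finv]; exact hyval)
  · show partner hn w y = inf hn
    rw [partner, if_neg hw, if_pos rfl]
    rfl
  · intro r hr
    rw [hQw, hQi]
    have hne : y - r ≠ 0 := sub_ne_zero.mpr (Ne.symm hr)
    have he := g_even (n := n) hne
    have hm : (n/2) % 2 = 1 := by omega
    omega
  · have hs : ((univ : Finset (ZMod (n-1))).filter fun r => Q n w r < n/2)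
        = (univ : Finset (ZMod (n-1))).filter fun r => g n (y - r) < n/2 := by
      apply filter_congr; intro r _; rw [hQw]
    rw [hs, card_filter_shift hn y (fun z => g n z < n/2), count_lt hn hmod]
  · have hs : ((univ : Finset (ZMod (n-1))).filter fun r => n/2 < Q n w r)
        = (univ : Finset (ZMod (n-1))).filter fun r => n/2 < g n (y - r) := by
      apply filter_congr; intro r _; rw [hQw]
    rw [hs, card_filter_shift hn y (fun z => n/2 < g n z), count_gt hn hmod]

lemma inf_pair [NeZero (n-1)] (hn : 6 ≤ n) (hmod : n % 4 = 2) (T : Fin n → Fin n → Prop)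
    (htot : ∀ i j : Fin n, i ≠ j → (T i j ↔ ¬ T j i))
    {u v : Fin n} (hOr : (u = inf hn ∧ v.val ≠ n-1) ∨ (v = inf hn ∧ u.val ≠ n-1))
    (hT : T u v) :
    ((univ : Finset (ZMod (n-1))).filter fun r => eps hn T r v < eps hn T r u).card = n/2 ∧
    ((univ : Finset (ZMod (n-1))).filter fun r => eps hn T r u < eps hn T r v).card = n/2 - 1 ∧
    (∀ r : ZMod (n-1), eps hn T r u ≠ eps hn T r v) := by
  classical
  rcases hOr with ⟨rfl, hw⟩ | ⟨rfl, hw⟩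
  · -- u = inf beats finite v
    obtain ⟨hQm, hpi, hpw, hQne, hQi, hQw, hclt, hcgt⟩ := inf_prelim hn hmod T hw
    set y : ZMod (n-1) := ((v.val : ℕ) : ZMod (n-1)) with hydef
    have hne : inf hn ≠ v := by
      intro h; apply hw; rw [← h]; rfl
    have hnT : ¬ T v (inf hn) := by
      have := (htot _ _ hne).mp hT
      exact this
    have hmatched : eps hn T y v < eps hn T y (inf hn) :=
      eps_matched hn T hQm hpi hpw hT hnT
    have hyQ : Q n v y = n/2 := by rw [hQw, sub_self, g_zero]
    have hygt : y ∉ (univ : Finset (ZMod (n-1))).filter fun r => n/2 < Q n v r := by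
      simp [hyQ]
    have hset1 : ((univ : Finset (ZMod (n-1))).filter fun r => eps hn T r v < eps hn T r (inf hn))
        = insert y ((univ : Finset (ZMod (n-1))).filter fun r => Q n v r < n/2) := by
      ext r
      simp only [mem_filter, mem_univ, true_and, mem_insert]
      constructor
      · intro hlt
        by_cases hr : r = y
        · left; exact hr
        · right
          have h := (eps_lt_iff hn T (hQne r hr)).mp hlt
          rwa [hQi] at h
      · intro h
        rcases h with rfl | hr
        · exact hmatched
        · by_cases hr2 : r = y
          · subst hr2; omega
          · apply eps_lt_of_Q_lt hn T
            rwa [hQi]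
      
    have hset2 : ((univ : Finset (ZMod (n-1))).filter fun r => eps hn T r (inf hn) < eps hn T r v)
        = (univ : Finset (ZMod (n-1))).filter fun r => n/2 < Q n v r := by
      ext r
      simp only [mem_filter, mem_univ, true_and]
      constructor
      · intro hlt
        by_cases hr : r = y
        · exfalso; subst hr; omega
        · have h := (eps_lt_iff hn T (Ne.symm (hQne r hr))).mp hlt
          rwa [hQi] at h
      · intro h
        by_cases hr : r = y
        · exfalso; subst hr; omega
        · apply eps_lt_of_Q_lt hn T
          rwa [hQi]
    have hynot : y ∉ (univ : Finset (ZMod (n-1))).filter fun r => Q n v r < n/2 := by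
      simp [hyQ]
    refine ⟨?_, ?_, ?_⟩
    · rw [hset1, card_insert_of_notMem hynot, hclt]; omega
    · rw [hset2, hcgt]
    · intro r
      by_cases hr : r = y
      · subst hr; omega
      · exact Ne.symm (eps_ne_of_Q_ne hn T (hQne r hr))
  · -- finite u beats v = inf
    obtain ⟨hQm, hpi, hpw, hQne, hQi, hQw, hclt, hcgt⟩ := inf_prelim hn hmod T hw
    set y : ZMod (n-1) := ((u.val : ℕ) : ZMod (n-1)) with hydef
    have hne : u ≠ inf hn := by
      intro h; apply hw; rw [h]; rfl
    have hnT : ¬ T (inf hn) u := by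
      exact (htot _ _ hne).mp hT
    have hmatched : eps hn T y (inf hn) < eps hn T y u :=
      eps_matched hn T hQm.symm hpw hpi hT hnT
    have hyQ : Q n u y = n/2 := by rw [hQw, sub_self, g_zero]
    have hset1 : ((univ : Finset (ZMod (n-1))).filter fun r => eps hn T r (inf hn) < eps hn T r u)
        = insert y ((univ : Finset (ZMod (n-1))).filter fun r => n/2 < Q n u r) := by
      ext r
      simp only [mem_filter, mem_univ, true_and, mem_insert]
      constructor
      · intro hlt
        by_cases hr : r = y
        · left; exact hr
        · right
          have h := (eps_lt_iff hn T (Ne.symm (hQne r hr))).mp hlt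
          rwa [hQi] at h
      · intro h
        rcases h with rfl | hr
        · exact hmatched
        · by_cases hr2 : r = y
          · subst hr2; omega
          · apply eps_lt_of_Q_lt hn T
            rwa [hQi]
    have hset2 : ((univ : Finset (ZMod (n-1))).filter fun r => eps hn T r u < eps hn T r (inf hn))
        = (univ : Finset (ZMod (n-1))).filter fun r => Q n u r < n/2 := by
      ext r
      simp only [mem_filter, mem_univ, true_and]
      constructor
      · intro hlt
        by_cases hr : r = y
        · exfalso; subst hr; omega
        · have h := (eps_lt_iff hn T (hQne r hr)).mp hlt
          rwa [hQi] at h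
      · intro h
        by_cases hr : r = y
        · exfalso; subst hr; omega
        · apply eps_lt_of_Q_lt hn T
          rwa [hQi]
    have hynot : y ∉ (univ : Finset (ZMod (n-1))).filter fun r => n/2 < Q n u r := by
      simp [hyQ]
    refine ⟨?_, ?_, ?_⟩
    · rw [hset1, card_insert_of_notMem hynot, hcgt]; omega
    · rw [hset2, hclt]
    · intro r
      by_cases hr : r = y
      · subst hr; omega
      · exact eps_ne_of_Q_ne hn T (hQne r hr)

lemma core [NeZero (n-1)] (hn : 6 ≤ n) (hmod : n % 4 = 2) (T : Fin n → Fin n → Prop)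
    (htot : ∀ i j : Fin n, i ≠ j → (T i j ↔ ¬ T j i))
    {i j : Fin n} (hij : i ≠ j) (hT : T i j) :
    ((univ : Finset (ZMod (n-1))).filter fun r => eps hn T r j < eps hn T r i).card = n/2 ∧
    ((univ : Finset (ZMod (n-1))).filter fun r => eps hn T r i < eps hn T r j).card = n/2 - 1 ∧
    (∀ r : ZMod (n-1), eps hn T r i ≠ eps hn T r j) := by
  by_cases hi : i.val = n-1
  · have hj : j.val ≠ n-1 := by
      intro hj; exact hij (Fin.ext (by rw [hi, hj]))
    exact inf_pair hn hmod T htot (Or.inl ⟨Fin.ext hi, hj⟩) hT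
  · by_cases hj : j.val = n-1
    · exact inf_pair hn hmod T htot (Or.inr ⟨Fin.ext hj, hi⟩) hT
    · exact finite_pair hn hmod T htot hi hj hij hT

lemma eps_bound (hn : 6 ≤ n) (T : Fin n → Fin n → Prop) (r : ZMod (n-1)) (a : Fin n) :
    eps hn T r a < 10 * n := by
  have h1 : Q n a r ≤ 2 * n := by
    rw [Q]; split_ifs
    · omega
    · exact g_bound _
  unfold eps; split_ifs <;> omega

lemma dom {C A B e1 e2 : ℕ} (h1 : e1 < C) (h2 : e2 < C) :
    (C * B + e2 < C * A + e1) ↔ (B < A ∨ (A = B ∧ e2 < e1)) := by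
  constructor
  · intro h
    rcases lt_trichotomy A B with hab | hab | hab
    · exfalso
      have hc : C * (A + 1) ≤ C * B := Nat.mul_le_mul_left C hab
      rw [Nat.mul_succ] at hc
      linarith
    · right
      refine ⟨hab, ?_⟩
      subst hab
      linarith
    · left; exact hab
  · intro h
    rcases h with hab | ⟨hab, he⟩
    · have hc : C * (B + 1) ≤ C * A := Nat.mul_le_mul_left C hab
      rw [Nat.mul_succ] at hc
      linarith
    · subst hab
      linarith

end lemmas

end

end BalancedDice

open BalancedDice Finset

/-- For `n ≥ 6` with `n ≡ 2 (mod 4)`, every tournament on `n` vertices is realized by `n`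
dice with `n - 1` sides, where every edge of the tournament is won with face-win count
exactly `((n-1)² + 1)/2`. -/
theorem tournament_realized_by_balanced_dice_two_mod_four (n : ℕ) (hn : 6 ≤ n)
    (hmod : n % 4 = 2)
    (T : Fin n → Fin n → Prop)
    (hirr : ∀ i, ¬ T i i)
    (htot : ∀ i j : Fin n, i ≠ j → (T i j ↔ ¬ T j i)) :
    ∃ X : Fin n → Fin (n - 1) → ℕ,
      ∀ i j : Fin n, i ≠ j → T i j →
        2 * faceWins (n - 1) (X i) (X j) = (n - 1) ^ 2 + 1 := by
  haveI : NeZero (n-1) := ⟨by omega⟩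
  classical
  refine ⟨fun i a => 10 * n * (a : ℕ) + eps hn T (((a : ℕ) : ZMod (n-1))) i, ?_⟩
  intro i j hij hT
  set X : Fin n → Fin (n - 1) → ℕ :=
    fun i a => 10 * n * (a : ℕ) + eps hn T (((a : ℕ) : ZMod (n-1))) i with hXdef
  obtain ⟨hWi, hWj, hne⟩ := core hn hmod T htot hij hT
  -- comparison characterization
  have hcomp : ∀ (iw jl : Fin n) (a b : Fin (n-1)),
      (X jl b < X iw a) ↔ ((b : ℕ) < (a : ℕ) ∨ (a = b ∧
        eps hn T (((a : ℕ) : ZMod (n-1))) jl < eps hn T (((a : ℕ) : ZMod (n-1))) iw)) := by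
    intro iw jl a b
    rw [hXdef]
    simp only []
    rw [dom (eps_bound hn T _ iw) (eps_bound hn T _ jl)]
    constructor
    · rintro (h | ⟨h, h2⟩)
      · left; exact h
      · right
        have hab : a = b := Fin.ext h
        subst hab
        exact ⟨rfl, h2⟩
    · rintro (h | ⟨rfl, h2⟩)
      · left; exact h
      · right; exact ⟨rfl, h2⟩
  -- no ties
  have hnoties : ∀ (a b : Fin (n-1)), X i a ≠ X j b := by
    intro a b hEq
    rcases lt_trichotomy ((a : ℕ)) ((b : ℕ)) with hab | hab | hab
    · have : X i a < X j b := by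
        rw [hXdef]
        simp only []
        have hc : 10*n*((a:ℕ)+1) ≤ 10*n*(b:ℕ) := Nat.mul_le_mul_left _ hab
        rw [Nat.mul_succ] at hc
        have := eps_bound hn T (((a : ℕ) : ZMod (n-1))) i
        linarith
      omega
    · have hab' : a = b := Fin.ext hab
      subst hab'
      have : eps hn T (((a : ℕ) : ZMod (n-1))) i = eps hn T (((a : ℕ) : ZMod (n-1))) j := by
        have := hEq
        rw [hXdef] at this
        simp only [] at this
        omega
      exact hne _ this
    · have : X j b < X i a := by
        rw [hXdef]
        simp only []
        have hc : 10*n*((b:ℕ)+1) ≤ 10*n*(a:ℕ) := Nat.mul_le_mul_left _ hab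
        rw [Nat.mul_succ] at hc
        have := eps_bound hn T (((b : ℕ) : ZMod (n-1))) j
        linarith
      omega
  -- decomposition of a win-set
  have hdecomp : ∀ (iw jl : Fin n),
      ((univ : Finset (Fin (n-1) × Fin (n-1))).filter fun p => X jl p.2 < X iw p.1).card
        = ((univ : Finset (Fin (n-1) × Fin (n-1))).filter fun p => (p.2 : ℕ) < (p.1 : ℕ)).card
          + ((univ : Finset (ZMod (n-1))).filter fun r =>
              eps hn T r jl < eps hn T r iw).card := by
    intro iw jl
    have hre : ((univ : Finset (Fin (n-1) × Fin (n-1))).filter fun p => X jl p.2 < X iw p.1)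
        = ((univ : Finset (Fin (n-1) × Fin (n-1))).filter fun p => (p.2 : ℕ) < (p.1 : ℕ))
          ∪ ((univ : Finset (Fin (n-1) × Fin (n-1))).filter fun p => p.1 = p.2 ∧
              eps hn T (((p.1 : ℕ) : ZMod (n-1))) jl < eps hn T (((p.1 : ℕ) : ZMod (n-1))) iw) := by
      rw [← filter_or]
      apply filter_congr
      intro p _
      rw [hcomp iw jl p.1 p.2]
    rw [hre, card_union_of_disjoint]
    · congr 1
      apply card_nbij' (fun p : Fin (n-1) × Fin (n-1) => (((p.1 : ℕ) : ZMod (n-1))))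
        (fun r : ZMod (n-1) => ((⟨r.val, ZMod.val_lt r⟩ : Fin (n-1)), (⟨r.val, ZMod.val_lt r⟩ : Fin (n-1))))
      · intro p hp
        simp only [Finset.mem_coe, mem_filter, mem_univ, true_and] at hp ⊢
        exact hp.2
      · intro r hr
        simp only [Finset.mem_coe, mem_filter, mem_univ, true_and] at hr
        have hval : (((⟨r.val, ZMod.val_lt r⟩ : Fin (n-1)) : ℕ) : ZMod (n-1)) = r :=
          ZMod.natCast_rightInverse r
        simp only [Finset.mem_coe, mem_filter, mem_univ, true_and, hval]
        exact hr
      · intro p hp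
        simp only [Finset.mem_coe, mem_filter, mem_univ, true_and] at hp
        have h1 : (((p.1 : ℕ) : ZMod (n-1))).val = (p.1 : ℕ) := ZMod.val_cast_of_lt p.1.isLt
        have h2 : p.1 = p.2 := hp.1
        ext
        · simp [h1]
        · simp [h1, ← h2]
      · intro r hr
        exact ZMod.natCast_rightInverse r
    · rw [disjoint_left]
      intro p hp1 hp2
      simp only [mem_filter, mem_univ, true_and] at hp1 hp2
      rw [hp2.1] at hp1
      omega
  -- the complement and swap
  have hswap : ((univ : Finset (Fin (n-1) × Fin (n-1))).filter fun p => ¬ (X j p.2 < X i p.1)).card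
      = ((univ : Finset (Fin (n-1) × Fin (n-1))).filter fun p => X i p.2 < X j p.1).card := by
    apply card_nbij' (fun p : Fin (n-1) × Fin (n-1) => (p.2, p.1))
      (fun p : Fin (n-1) × Fin (n-1) => (p.2, p.1))
    · intro p hp
      simp only [Finset.mem_coe, mem_filter, mem_univ, true_and] at hp ⊢
      have := hnoties p.1 p.2
      omega
    · intro p hp
      simp only [Finset.mem_coe, mem_filter, mem_univ, true_and] at hp ⊢
      have := hnoties p.2 p.1
      omega
    · intro p _; rfl
    · intro p _; rfl
  have htotal : ((univ : Finset (Fin (n-1) × Fin (n-1))).filter fun p => X j p.2 < X i p.1).card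
      + ((univ : Finset (Fin (n-1) × Fin (n-1))).filter fun p => ¬ (X j p.2 < X i p.1)).card
      = (n-1) * (n-1) := by
    rw [card_filter_add_card_filter_not, card_univ]
    simp [Fintype.card_prod]
  have hA := hdecomp i j
  have hB := hdecomp j i
  rw [hWi] at hA
  rw [hWj] at hB
  have hfw : faceWins (n-1) (X i) (X j)
      = ((univ : Finset (Fin (n-1) × Fin (n-1))).filter fun p => X j p.2 < X i p.1).card := rfl
  rw [hfw]
  have hsq : (n-1)^2 = (n-1)*(n-1) := sq (n-1) ▸ rfl
  rw [hsq]
  have hm3 : 3 ≤ n/2 := by omega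
  omega
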